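/- Let r be a regular expression over an alphabet Δ and a ∈ Δ. If the partial Brzozowski derivative deriv(a,r) is defined, then L_inf(deriv(a,r)) = {w ∈ Δ^ω | a·w ∈ L_inf(r)}. If deriv(a,r) is undefined, then {w ∈ Δ^ω | a·w ∈ L_inf(r)} = ∅. -/

import Mathlib

set_option maxHeartbeats 1000000
set_option autoImplicit false

universe u v w

namespace AMP

/-- Events: `send p q m` means participant `p` sends message `m` to `q`;
`recv p q m` means participant `q` receives message `m` that was sent by `p`. -/
inductive Ev (P : Type u) (V : Type v) : Type (max u v) where
  | send : P → P → V → Ev P V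
  | recv : P → P → V → Ev P V
deriving DecidableEq

namespace Ev
variable {P : Type u} {V : Type v}
/-- The events in which participant `r` is active (the alphabet `Σ_r`). -/
def Active (r : P) : Ev P V → Prop
  | .send p _ _ => p = r
  | .recv _ q _ => q = r
end Ev

/-- Finite or infinite words: `Σ^∞ = Σ* ∪ Σ^ω`. -/
abbrev Word (E : Type w) := List E ⊕ (ℕ → E)

namespace Word
variable {E : Type w}
/-- First `n` letters of a word, as a finite list. -/
def take : Word E → ℕ → List E
  | .inl u, n => u.take n
  | .inr f, n => (List.range n).map f
/-- The letter at position `n`, if any. -/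
def get? : Word E → ℕ → Option E
  | .inl u, n => u[n]?
  | .inr f, n => some (f n)
/-- `u` is a (finite) prefix of the word `w`. -/
def IsPref (u : List E) (w : Word E) : Prop := take w u.length = u
/-- Prepend a letter to a word. -/
def cons (a : E) : Word E → Word E
  | .inl u => .inl (a :: u)
  | .inr f => .inr fun n => match n with | 0 => a | k+1 => f k
end Word

/-- `pref L`: the set of finite prefixes of words of `L`. -/
def pref {E : Type w} (L : Set (Word E)) : Set (List E) := {u | ∃ w ∈ L, Word.IsPref u w}

/-- `first(L) = pref(L) ∩ Σ`: first letters of words of `L`. -/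
def firstL {E : Type w} (L : Set (Word E)) : Set E := {a | [a] ∈ pref L}

/-- Regular expressions over an alphabet `Δ`. -/
inductive RE (Δ : Type w) : Type w where
  | eps : RE Δ
  | ch : Δ → RE Δ
  | plus : RE Δ → RE Δ → RE Δ
  | cat : RE Δ → RE Δ → RE Δ
  | star : RE Δ → RE Δ

namespace RE
variable {Δ : Type w}

/-- The finite-word language of a regular expression. -/
def finLang : RE Δ → Language Δ
  | .eps => 1
  | .ch a => {[a]}
  | .plus r s => finLang r + finLang s
  | .cat r s => finLang r * finLang s
  | .star r => KStar.kstar (finLang r)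

/-- The infinite-word language: infinite words all of whose finite prefixes are
prefixes of finite words of the expression. -/
def infLang (r : RE Δ) : Set (ℕ → Δ) :=
  {f | ∀ n, ∃ w ∈ finLang r, (List.range n).map f <+: w}

/-- The full language `L(r) = L_fin(r) ∪ L_inf(r)` as a set of words. -/
def lang (r : RE Δ) : Set (Word Δ) :=
  {w | (∃ u, w = Sum.inl u ∧ u ∈ finLang r) ∨ ∃ f, w = Sum.inr f ∧ f ∈ infLang r}

/-- The symbol `ε` does not occur in the expression. -/
def epsFree : RE Δ → Prop
  | .eps => False
  | .ch _ => True
  | .plus r s => epsFree r ∧ epsFree s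
  | .cat r s => epsFree r ∧ epsFree s
  | .star r => epsFree r

/-- Partial union, absorbing undefined arguments. -/
def oplus : Option (RE Δ) → Option (RE Δ) → Option (RE Δ)
  | some r, some s => some (.plus r s)
  | some r, none => some r
  | none, x => x

/-- The partial Brzozowski derivative. -/
noncomputable def deriv [DecidableEq Δ] (a : Δ) : RE Δ → Option (RE Δ)
  | .eps => none
  | .ch b => if b = a then some .eps else none
  | .plus r s => oplus (deriv a r) (deriv a s)
  | .cat r s =>
      haveI : Decidable (([] : List Δ) ∈ finLang r) := Classical.propDecidable _
      if ([] : List Δ) ∈ finLang r then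
        oplus ((deriv a r).map fun r' => RE.cat r' s) (deriv a s)
      else (deriv a r).map fun r' => RE.cat r' s
  | .star r => (deriv a r).map fun r' => RE.cat r' (RE.star r)

/-- Marking: replace each letter occurrence by a copy carrying a distinct index
(threading a counter left to right). -/
def markAux : RE Δ → ℕ → RE (Δ × ℕ) × ℕ
  | .eps, n => (.eps, n)
  | .ch a, n => (.ch (a, n), n+1)
  | .plus r s, n =>
      let pr := markAux r n
      let ps := markAux s pr.2
      (.plus pr.1 ps.1, ps.2)
  | .cat r s, n =>
      let pr := markAux r n
      let ps := markAux s pr.2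
      (.cat pr.1 ps.1, ps.2)
  | .star r, n =>
      let pr := markAux r n
      (.star pr.1, pr.2)

def mark (r : RE Δ) : RE (Δ × ℕ) := (markAux r 0).1
end RE

/-- A sender-driven regular expression over the event alphabet: any two distinct
marked letters enabled after a common prefix of `L(mark r)` are distinct send
events of a common sender. -/
def SenderDrivenRE {P : Type u} {V : Type v} (r : RE (Ev P V)) : Prop :=
  ∀ (u : List (Ev P V × ℕ)) (x y : Ev P V × ℕ),
    u ++ [x] ∈ pref (RE.lang (RE.mark r)) →
    u ++ [y] ∈ pref (RE.lang (RE.mark r)) →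
    x ≠ y →
    x.1 ≠ y.1 ∧ ∃ p : P, (∃ q m, x.1 = Ev.send p q m) ∧ ∃ q m, y.1 = Ev.send p q m

/-- Prepend a letter to an infinite word. -/
def icons {E : Type w} (a : E) (f : ℕ → E) : ℕ → E
  | 0 => a
  | n+1 => f n

section Aux
variable {Δ : Type w}

lemma cons_mem_mul {l m : Language Δ} {a : Δ} {w : List Δ} :
    a :: w ∈ l * m ↔ (∃ u v, a :: u ∈ l ∧ v ∈ m ∧ u ++ v = w) ∨ ([] ∈ l ∧ a :: w ∈ m) := by
  constructor
  · intro h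
    obtain ⟨x, hx, y, hy, hxy⟩ := Language.mem_mul.mp h
    cases x with
    | nil =>
      right
      refine ⟨hx, ?_⟩
      simpa using hxy ▸ hy
    | cons b u =>
      have hb : b = a ∧ u ++ y = w := by simpa using hxy
      obtain ⟨rfl, rfl⟩ := hb
      exact Or.inl ⟨u, y, hx, hy, rfl⟩
  · rintro (⟨u, v, hu, hv, rfl⟩ | ⟨h1, h2⟩)
    · exact Language.mem_mul.mpr ⟨a :: u, hu, v, hv, rfl⟩
    · exact Language.mem_mul.mpr ⟨[], h1, a :: w, h2, rfl⟩

lemma join_cons_kstar {l : Language Δ} :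
    ∀ (L : List (List Δ)) {a : Δ} {w : List Δ}, (∀ y ∈ L, y ∈ l) → L.flatten = a :: w →
      ∃ u v, a :: u ∈ l ∧ v ∈ KStar.kstar l ∧ u ++ v = w := by
  intro L
  induction L with
  | nil => intro a w _ h; simp at h
  | cons x L ih =>
    intro a w hmem hj
    cases x with
    | nil =>
      exact ih (fun y hy => hmem y (List.mem_cons_of_mem _ hy)) (by simpa using hj)
    | cons b u =>
      have hb : b = a ∧ u ++ L.flatten = w := by simpa using hj
      obtain ⟨rfl, rfl⟩ := hb
      exact ⟨u, L.flatten, hmem _ List.mem_cons_self,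
        Language.mem_kstar.mpr ⟨L, rfl, fun y hy => hmem y (List.mem_cons_of_mem _ hy)⟩, rfl⟩

lemma cons_mem_kstar {l : Language Δ} {a : Δ} {w : List Δ} :
    a :: w ∈ KStar.kstar l ↔ ∃ u v, a :: u ∈ l ∧ v ∈ KStar.kstar l ∧ u ++ v = w := by
  constructor
  · intro h
    obtain ⟨L, hL, hmem⟩ := Language.mem_kstar.mp h
    exact join_cons_kstar L hmem hL.symm
  · rintro ⟨u, v, hu, hv, rfl⟩
    obtain ⟨L, rfl, hmem⟩ := Language.mem_kstar.mp hv
    refine Language.mem_kstar.mpr ⟨(a :: u) :: L, by simp, ?_⟩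
    intro y hy
    rcases List.mem_cons.mp hy with rfl | hy
    · exact hu
    · exact hmem y hy

lemma mem_oplus {o1 o2 : Option (RE Δ)} {w : List Δ} :
    (∃ r', RE.oplus o1 o2 = some r' ∧ w ∈ RE.finLang r') ↔
      (∃ r', o1 = some r' ∧ w ∈ RE.finLang r') ∨
        (∃ r', o2 = some r' ∧ w ∈ RE.finLang r') := by
  cases o1 <;> cases o2 <;>
    simp [RE.oplus, RE.finLang, Language.mem_add]

lemma mem_map_cat {o : Option (RE Δ)} {s : RE Δ} {w : List Δ} :
    (∃ x, (o.map fun r' => RE.cat r' s) = some x ∧ w ∈ RE.finLang x) ↔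
      ∃ r', o = some r' ∧ w ∈ RE.finLang r' * RE.finLang s := by
  cases o <;> simp [RE.finLang]

lemma derivFin [DecidableEq Δ] (a : Δ) (r : RE Δ) :
    ∀ w, a :: w ∈ RE.finLang r ↔ ∃ r', RE.deriv a r = some r' ∧ w ∈ RE.finLang r' := by
  induction r with
  | eps =>
    intro w
    simp [RE.finLang, RE.deriv, Language.mem_one]
  | ch b =>
    intro w
    constructor
    · intro h
      have h' : a :: w = [b] := h
      have hbw : b = a ∧ w = [] := by cases h'; exact ⟨rfl, rfl⟩
      obtain ⟨rfl, rfl⟩ := hbw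
      exact ⟨.eps, by simp [RE.deriv], (Language.mem_one _).mpr rfl⟩
    · rintro ⟨r', hr', hw⟩
      rw [RE.deriv] at hr'
      split_ifs at hr' with hb
      · subst hb
        obtain rfl : RE.eps = r' := by injection hr'
        obtain rfl : w = [] := (Language.mem_one _).mp hw
        rfl
  | plus r s ihr ihs =>
    intro w
    show a :: w ∈ RE.finLang r + RE.finLang s ↔ _
    rw [Language.mem_add, ihr, ihs, RE.deriv, mem_oplus]
  | cat r s ihr ihs =>
    intro w
    show a :: w ∈ RE.finLang r * RE.finLang s ↔ _
    rw [RE.deriv]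
    split_ifs with h
    · rw [cons_mem_mul, mem_oplus, mem_map_cat]
      constructor
      · rintro (⟨u, v, hu, hv, rfl⟩ | ⟨-, h2⟩)
        · obtain ⟨r', hr', hu'⟩ := (ihr u).mp hu
          exact Or.inl ⟨r', hr', Language.mem_mul.mpr ⟨u, hu', v, hv, rfl⟩⟩
        · exact Or.inr ((ihs w).mp h2)
      · rintro (⟨r', hr', hw⟩ | h2)
        · obtain ⟨u, hu, v, hv, rfl⟩ := Language.mem_mul.mp hw
          exact Or.inl ⟨u, v, (ihr u).mpr ⟨r', hr', hu⟩, hv, rfl⟩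
        · exact Or.inr ⟨h, (ihs w).mpr h2⟩
    · rw [cons_mem_mul, mem_map_cat]
      constructor
      · rintro (⟨u, v, hu, hv, rfl⟩ | ⟨h1, -⟩)
        · obtain ⟨r', hr', hu'⟩ := (ihr u).mp hu
          exact ⟨r', hr', Language.mem_mul.mpr ⟨u, hu', v, hv, rfl⟩⟩
        · exact absurd h1 h
      · rintro ⟨r', hr', hw⟩
        obtain ⟨u, hu, v, hv, rfl⟩ := Language.mem_mul.mp hw
        exact Or.inl ⟨u, v, (ihr u).mpr ⟨r', hr', hu⟩, hv, rfl⟩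
  | star r ihr =>
    intro w
    show a :: w ∈ KStar.kstar (RE.finLang r) ↔ _
    rw [RE.deriv, mem_map_cat, cons_mem_kstar]
    constructor
    · rintro ⟨u, v, hu, hv, rfl⟩
      obtain ⟨r', hr', hu'⟩ := (ihr u).mp hu
      exact ⟨r', hr', Language.mem_mul.mpr ⟨u, hu', v, hv, rfl⟩⟩
    · rintro ⟨r', hr', hw⟩
      obtain ⟨u, hu, v, hv, rfl⟩ := Language.mem_mul.mp hw
      exact ⟨u, v, (ihr u).mpr ⟨r', hr', hu⟩, hv, rfl⟩

lemma range_succ_map_icons (a : Δ) (f : ℕ → Δ) (n : ℕ) :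
    (List.range (n + 1)).map (icons a f) = a :: (List.range n).map f := by
  rw [List.range_succ_eq_map, List.map_cons, List.map_map]
  rfl

end Aux

/-- If the partial Brzozowski derivative `deriv a r` is defined
then `L_inf(deriv a r) = {w | a·w ∈ L_inf r}`; if it is undefined then
`{w | a·w ∈ L_inf r} = ∅`. -/
theorem deriv_infLang {Δ : Type w} [DecidableEq Δ] (r : RE Δ) (a : Δ) :
    (∀ r', RE.deriv a r = some r' → RE.infLang r' = {f | icons a f ∈ RE.infLang r}) ∧
    (RE.deriv a r = none → {f : ℕ → Δ | icons a f ∈ RE.infLang r} = ∅) := by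
  constructor
  · intro r' hd
    ext f
    simp only [RE.infLang, Set.mem_setOf_eq]
    constructor
    · intro hf n
      cases n with
      | zero =>
        obtain ⟨w, hw, _⟩ := hf 0
        exact ⟨a :: w, (derivFin a r w).mpr ⟨r', hd, hw⟩, by simp⟩
      | succ n =>
        obtain ⟨w, hw, hp⟩ := hf n
        refine ⟨a :: w, (derivFin a r w).mpr ⟨r', hd, hw⟩, ?_⟩
        rw [range_succ_map_icons]
        exact List.cons_prefix_cons.mpr ⟨rfl, hp⟩
    · intro hf n
      obtain ⟨w, hw, hp⟩ := hf (n + 1)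
      rw [range_succ_map_icons] at hp
      obtain ⟨t, rfl⟩ := hp
      obtain ⟨r'', hr'', hmem⟩ := (derivFin a r _).mp hw
      rw [hd] at hr''
      obtain rfl : r' = r'' := by injection hr''
      exact ⟨(List.range n).map f ++ t, hmem, ⟨t, rfl⟩⟩
  · intro hd
    ext f
    simp only [Set.mem_setOf_eq, Set.mem_empty_iff_false, iff_false]
    intro hf
    obtain ⟨w, hw, hp⟩ := hf 1
    have h1 : (List.range 1).map (icons a f) = [a] := by
      rw [show (1 : ℕ) = 0 + 1 from rfl, range_succ_map_icons]; simp
    rw [h1] at hp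
    obtain ⟨t, rfl⟩ := hp
    obtain ⟨r', hr', -⟩ := (derivFin a r _).mp hw
    rw [hd] at hr'
    exact absurd hr' (by simp)

end AMP
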